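/- Let T = k[x₁,…,x_ℓ] and let I ⊆ J be monomial ideals in T such that (i) dim(T/I) = dim(T/J), (ii) e(T/I) = e(T/J), and (iii) I = I_Δ for a pure simplicial complex Δ on ground set [ℓ]. Then I = J. -/

import Mathlib

open MvPolynomial Finsupp Filter

/-- The Stanley–Reisner ideal of a simplicial complex `Δ` on vertex set `Fin ℓ`:
generated by the squarefree monomials `∏_{v ∈ σ} X v` over the non-faces `σ`
(equivalently, over the minimal non-faces). -/
noncomputable def SRideal (K : Type) [Field K] (ℓ : ℕ) (Δ : Finset (Finset (Fin ℓ))) :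
    Ideal (MvPolynomial (Fin ℓ) K) :=
  Ideal.span {f | ∃ σ : Finset (Fin ℓ), σ ∉ Δ ∧ f = ∏ v ∈ σ, X v}

/-- A monomial ideal: an ideal generated by a set of monomials. -/
def IsMonomialIdeal {K : Type} [Field K] {ℓ : ℕ} (J : Ideal (MvPolynomial (Fin ℓ) K)) : Prop :=
  ∃ M : Set (Fin ℓ →₀ ℕ), J = Ideal.span ((fun μ => (monomial μ (1 : K))) '' M)

/-- The Hilbert function of the quotient by a monomial ideal `I`: the number of
monomials of total degree `m` not belonging to `I` (these form a `K`-basis of the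
degree-`m` part of `S/I`). -/
noncomputable def hilbF (K : Type) [Field K] (ℓ : ℕ) (I : Ideal (MvPolynomial (Fin ℓ) K))
    (m : ℕ) : ℕ :=
  Nat.card {μ : Fin ℓ →₀ ℕ // (μ.sum fun _ e => e) = m ∧ monomial μ (1 : K) ∉ I}

/-- `e` is the multiplicity of `S/I` (for `dim Δ = d`, Krull dimension `d+1`):
the Hilbert function satisfies `HF(m) ~ e·m^d/d!`. -/
def IsMultiplicity (K : Type) [Field K] (ℓ : ℕ) (I : Ideal (MvPolynomial (Fin ℓ) K))
    (d : ℕ) (e : ℝ) : Prop :=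
  Filter.Tendsto (fun m : ℕ => (hilbF K ℓ I m : ℝ) * (Nat.factorial d) / (m : ℝ) ^ d)
    Filter.atTop (nhds e)

/-- indicator finsupp of a finset -/
noncomputable def ind {ℓ : ℕ} (σ : Finset (Fin ℓ)) : Fin ℓ →₀ ℕ := ∑ w ∈ σ, Finsupp.single w 1

lemma ind_apply {ℓ : ℕ} (σ : Finset (Fin ℓ)) (v : Fin ℓ) :
    ind σ v = if v ∈ σ then 1 else 0 := by
  classical
  simp only [ind, Finsupp.finset_sum_apply, Finsupp.single_apply]
  rw [Finset.sum_ite_eq' σ v (fun _ => 1)]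

lemma ind_le_iff {ℓ : ℕ} (σ : Finset (Fin ℓ)) (μ : Fin ℓ →₀ ℕ) :
    ind σ ≤ μ ↔ σ ⊆ μ.support := by
  constructor
  · intro h v hv
    have := h v
    rw [ind_apply, if_pos hv] at this
    simp only [Finsupp.mem_support_iff]
    omega
  · intro h v
    rw [ind_apply]
    split
    · next hv => have := h hv; simp only [Finsupp.mem_support_iff] at this; omega
    · exact Nat.zero_le _

lemma prod_X_eq {K : Type} [Field K] {ℓ : ℕ} (σ : Finset (Fin ℓ)) :
    (∏ v ∈ σ, X v : MvPolynomial (Fin ℓ) K) = monomial (ind σ) 1 := by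
  classical
  induction σ using Finset.induction with
  | empty => simp [ind, monomial_eq]
  | insert _ _ h ih =>
    rw [Finset.prod_insert h, ind, Finset.sum_insert h, ih, X, monomial_mul, one_mul]; rfl

lemma SR_eq_span (K : Type) [Field K] (ℓ : ℕ) (Δ : Finset (Finset (Fin ℓ))) :
    SRideal K ℓ Δ =
      Ideal.span ((fun μ => monomial μ (1 : K)) '' {ν | ∃ σ : Finset (Fin ℓ), σ ∉ Δ ∧ ν = ind σ}) := by
  unfold SRideal
  congr 1
  ext f
  constructor
  · rintro ⟨σ, hσ, rfl⟩; exact ⟨ind σ, ⟨σ, hσ, rfl⟩, (prod_X_eq σ).symm⟩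
  · rintro ⟨ν, ⟨σ, hσ, rfl⟩, rfl⟩; exact ⟨σ, hσ, (prod_X_eq σ).symm⟩

lemma monomial_mem_SR_iff {K : Type} [Field K] {ℓ : ℕ} {Δ : Finset (Finset (Fin ℓ))}
    (hdown : ∀ s ∈ Δ, ∀ t ⊆ s, t ∈ Δ) (μ : Fin ℓ →₀ ℕ) :
    monomial μ (1 : K) ∈ SRideal K ℓ Δ ↔ μ.support ∉ Δ := by
  classical
  rw [SR_eq_span, mem_ideal_span_monomial_image]
  rw [support_monomial, if_neg (one_ne_zero)]
  constructor
  · intro h hsupp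
    obtain ⟨si, ⟨σ, hσ, rfl⟩, hle⟩ := h μ (Finset.mem_singleton_self μ)
    exact hσ (hdown _ hsupp _ ((ind_le_iff σ μ).1 hle))
  · intro h xi hxi
    rw [Finset.mem_singleton] at hxi
    rw [hxi]
    exact ⟨ind (Finsupp.support μ), ⟨Finsupp.support μ, h, rfl⟩, (ind_le_iff _ _).2 subset_rfl⟩

lemma monomial_mem_of_le {K : Type} [Field K] {ℓ : ℕ} {J : Ideal (MvPolynomial (Fin ℓ) K)}
    {μ ρ : Fin ℓ →₀ ℕ} (h : monomial μ (1 : K) ∈ J) (hle : μ ≤ ρ) :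
    monomial ρ (1 : K) ∈ J := by
  have : monomial ρ (1 : K) = monomial (ρ - μ) 1 * monomial μ 1 := by
    rw [monomial_mul, one_mul, tsub_add_cancel_of_le hle]
  rw [this]
  exact Ideal.mul_mem_left _ _ h

lemma exists_monomial_mem_notMem {K : Type} [Field K] {ℓ : ℕ}
    {I J : Ideal (MvPolynomial (Fin ℓ) K)} {M : Set (Fin ℓ →₀ ℕ)}
    (hJ : J = Ideal.span ((fun μ => monomial μ (1 : K)) '' M))
    {f : MvPolynomial (Fin ℓ) K} (hfJ : f ∈ J) (hfI : f ∉ I) :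
    ∃ μ : Fin ℓ →₀ ℕ, monomial μ (1 : K) ∈ J ∧ monomial μ (1 : K) ∉ I := by
  by_contra h
  push_neg at h
  apply hfI
  have hall : ∀ xi ∈ f.support, monomial xi (1 : K) ∈ J := by
    intro xi hxi
    rw [hJ] at hfJ ⊢
    rw [mem_ideal_span_monomial_image] at hfJ
    obtain ⟨si, hsi, hle⟩ := hfJ xi hxi
    exact monomial_mem_of_le (Ideal.subset_span ⟨si, hsi, rfl⟩) hle
  have : f = ∑ v ∈ f.support, C (coeff v f) * monomial v (1 : K) := by
    conv_lhs => rw [f.as_sum]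
    congr 1
    ext v
    rw [C_mul_monomial, mul_one]
  rw [this]
  exact Ideal.sum_mem _ fun v hv => Ideal.mul_mem_left _ _ (h v (hall v hv))

lemma degree_add' {ℓ : ℕ} (a b : Fin ℓ →₀ ℕ) : (a + b).degree = a.degree + b.degree := by
  simp [degree_eq_weight_one, map_add]

lemma degree_single' {ℓ : ℕ} (a : Fin ℓ) (k : ℕ) : (Finsupp.single a k).degree = k := by
  simp [degree_eq_weight_one, weight_apply, Finsupp.sum_single_index]

lemma degree_sum' {ℓ n : ℕ} (g : Fin n → (Fin ℓ →₀ ℕ)) :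
    (∑ i, g i).degree = ∑ i, (g i).degree := by
  simp [degree_eq_weight_one, map_sum]

lemma finite_deg_subtype {ℓ : ℕ} (m : ℕ) (P : (Fin ℓ →₀ ℕ) → Prop) :
    Finite {μ : Fin ℓ →₀ ℕ // (μ.sum fun _ e => e) = m ∧ P μ} := by
  have h : {μ : Fin ℓ →₀ ℕ | (μ.sum fun _ e => e) = m ∧ P μ}.Finite := by
    apply (Finsupp.finite_of_degree_le m).subset
    intro μ hμ
    exact le_of_eq hμ.1
  exact h.to_subtype

lemma key_count {K : Type} [Field K] {ℓ d : ℕ} {Δ : Finset (Finset (Fin ℓ))}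
    (hdown : ∀ s ∈ Δ, ∀ t ⊆ s, t ∈ Δ)
    {F : Finset (Fin ℓ)} (hF : F ∈ Δ) (hcard : F.card = d + 1)
    {J : Ideal (MvPolynomial (Fin ℓ) K)} (hIJ : SRideal K ℓ Δ ≤ J)
    {μ : Fin ℓ →₀ ℕ} (hμJ : monomial μ (1 : K) ∈ J) (hsupp : μ.support ⊆ F)
    (m : ℕ) (hm : μ.degree ≤ m) :
    hilbF K ℓ J m + ((m - μ.degree) / d + 1) ^ d ≤ hilbF K ℓ (SRideal K ℓ Δ) m := by
  classical
  set n := m - μ.degree with hn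
  set q := n / d with hq
  set f : Fin (d + 1) → Fin ℓ := fun i => ((F.orderIsoOfFin hcard) i : Fin ℓ) with hf
  have hfinj : Function.Injective f := fun a b h =>
    (F.orderIsoOfFin hcard).injective (Subtype.ext h)
  have hfF : ∀ i, f i ∈ F := fun i => ((F.orderIsoOfFin hcard) i).2
  set ν : (Fin d → Fin (q + 1)) → (Fin ℓ →₀ ℕ) := fun x =>
    (∑ i : Fin d, Finsupp.single (f i.castSucc) (x i : ℕ)) +
      Finsupp.single (f (Fin.last d)) (n - ∑ i : Fin d, (x i : ℕ)) with hν
  have hsumle : ∀ x : Fin d → Fin (q + 1), (∑ i, (x i : ℕ)) ≤ n := by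
    intro x
    calc (∑ i, (x i : ℕ)) ≤ ∑ _i : Fin d, q :=
          Finset.sum_le_sum (fun i _ => Nat.lt_succ_iff.mp (x i).2)
      _ = d * q := by simp [Finset.sum_const, Nat.smul_one_eq_cast]
      _ ≤ n := by rw [mul_comm]; exact Nat.div_mul_le_self n d
  have hdeg : ∀ x, (ν x).degree = n := by
    intro x
    rw [hν]
    simp only [degree_add', degree_sum', degree_single']
    exact Nat.add_sub_cancel' (hsumle x)
  have hsupport : ∀ x, (ν x).support ⊆ F := by
    intro x
    refine (Finsupp.support_add).trans ?_
    apply Finset.union_subset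
    · refine (Finsupp.support_finset_sum).trans ?_
      intro v hv
      simp only [Finset.mem_biUnion] at hv
      obtain ⟨i, _, hi⟩ := hv
      have h1 := Finsupp.support_single_subset hi
      rw [Finset.mem_singleton] at h1
      rw [h1]
      exact hfF _
    · intro v hv
      have := Finsupp.support_single_subset hv
      rw [Finset.mem_singleton] at this
      rw [this]
      exact hfF _
  have heval : ∀ (x : Fin d → Fin (q + 1)) (j : Fin d), (ν x) (f j.castSucc) = (x j : ℕ) := by
    intro x j
    rw [hν]
    simp only [Finsupp.add_apply, Finsupp.finset_sum_apply, Finsupp.single_apply]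
    have h2 : f (Fin.last d) = f j.castSucc ↔ False := by
      simp only [iff_false]
      intro h
      exact Fin.ne_of_lt (Fin.castSucc_lt_last j) (hfinj h).symm
    rw [if_neg h2.mp]
    have h3 : ∀ i : Fin d, (if f i.castSucc = f j.castSucc then (x i : ℕ) else 0)
        = if i = j then (x i : ℕ) else 0 := by
      intro i
      congr 1
      simp only [eq_iff_iff]
      constructor
      · intro h; exact Fin.castSucc_injective d (hfinj h)
      · intro h; rw [h]
    simp only [h3]
    rw [Finset.sum_ite_eq' Finset.univ j (fun i => (x i : ℕ))]
    simp
  have hνinj : Function.Injective ν := by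
    intro x y h
    funext j
    have := congrArg (fun g : Fin ℓ →₀ ℕ => g (f j.castSucc)) h
    simp only [heval] at this
    exact Fin.ext this
  -- the injection
  haveI : Finite {ρ : Fin ℓ →₀ ℕ // (ρ.sum fun _ e => e) = m ∧ monomial ρ (1 : K) ∉ J} :=
    finite_deg_subtype m _
  haveI : Finite {ρ : Fin ℓ →₀ ℕ // (ρ.sum fun _ e => e) = m ∧ monomial ρ (1 : K) ∉ SRideal K ℓ Δ} :=
    finite_deg_subtype m _
  set B := {ρ : Fin ℓ →₀ ℕ // (ρ.sum fun _ e => e) = m ∧ monomial ρ (1 : K) ∉ J} with hB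
  set A := {ρ : Fin ℓ →₀ ℕ // (ρ.sum fun _ e => e) = m ∧ monomial ρ (1 : K) ∉ SRideal K ℓ Δ}
    with hA
  have hdegν : ∀ x, ((μ + ν x).sum fun _ e => e) = m := by
    intro x
    show (μ + ν x).degree = m
    rw [degree_add', hdeg x, hn]
    exact Nat.add_sub_cancel' hm
  have hmemJ : ∀ x, monomial (μ + ν x) (1 : K) ∈ J :=
    fun x => monomial_mem_of_le hμJ (le_add_right le_rfl)
  have hnotI : ∀ x, monomial (μ + ν x) (1 : K) ∉ SRideal K ℓ Δ := by
    intro x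
    rw [monomial_mem_SR_iff hdown]
    intro hcon
    apply hcon
    apply hdown F hF
    refine (Finsupp.support_add).trans ?_
    exact Finset.union_subset hsupp (hsupport x)
  set Φ : B ⊕ (Fin d → Fin (q + 1)) → A := fun z =>
    match z with
    | .inl b => ⟨b.1, b.2.1, fun hmem => b.2.2 (hIJ hmem)⟩
    | .inr x => ⟨μ + ν x, hdegν x, hnotI x⟩ with hΦ
  have hΦinj : Function.Injective Φ := by
    intro z w h
    have hval : (Φ z).1 = (Φ w).1 := congrArg Subtype.val h
    match z, w with
    | .inl b, .inl b' => exact congrArg Sum.inl (Subtype.ext hval)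
    | .inl b, .inr x =>
        exact absurd (hval ▸ hmemJ x) b.2.2
    | .inr x, .inl b =>
        exact absurd (hval ▸ hmemJ x) b.2.2
    | .inr x, .inr x' =>
        exact congrArg Sum.inr (hνinj (add_left_cancel hval))
  have hcardle : Nat.card (B ⊕ (Fin d → Fin (q + 1))) ≤ Nat.card A :=
    Nat.card_le_card_of_injective Φ hΦinj
  rw [Nat.card_sum] at hcardle
  simpa [hilbF, Nat.card_eq_fintype_card] using hcardle

lemma analysis_contra {c0 d : ℕ} (u v : ℕ → ℕ) (e : ℝ)
    (key : ∀ m, c0 ≤ m → v m + ((m - c0) / d + 1) ^ d ≤ u m)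
    (hu : Tendsto (fun m : ℕ => (u m : ℝ) * (Nat.factorial d) / (m : ℝ) ^ d) atTop (nhds e))
    (hv : Tendsto (fun m : ℕ => (v m : ℝ) * (Nat.factorial d) / (m : ℝ) ^ d) atTop (nhds e)) :
    False := by
  set D : ℕ → ℝ := fun m => (u m : ℝ) * (Nat.factorial d) / (m : ℝ) ^ d -
    (v m : ℝ) * (Nat.factorial d) / (m : ℝ) ^ d with hD
  have hD0 : Tendsto D atTop (nhds 0) := by
    have := hu.sub hv
    simpa using this
  set Kc : ℝ := (Nat.factorial d) / (d : ℝ) ^ d with hKc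
  have hKcpos : 0 < Kc := by
    rcases Nat.eq_zero_or_pos d with h | h
    · simp [hKc, h]
    · have : (0:ℝ) < (d:ℝ) ^ d := by positivity
      apply div_pos (by positivity) this
  set ψ : ℕ → ℝ := fun m => (1 - (c0 : ℝ) / m) ^ d * Kc with hψdef
  have hψ : Tendsto ψ atTop (nhds Kc) := by
    have h1 : Tendsto (fun m : ℕ => (c0 : ℝ) / m) atTop (nhds 0) :=
      tendsto_const_div_atTop_nhds_zero_nat (c0 : ℝ)
    have h2 := ((tendsto_const_nhds (x := (1:ℝ)) (f := atTop)).sub h1).pow d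
    have h3 := h2.mul_const Kc
    simpa using h3
  have hbound : ∀ᶠ m in atTop, ψ m ≤ D m := by
    filter_upwards [eventually_ge_atTop (c0 + 1)] with m hm
    have hm0 : 0 < m := by omega
    have hc0m : c0 ≤ m := by omega
    have hmR : (0:ℝ) < (m:ℝ) := by exact_mod_cast hm0
    set Q : ℕ := (m - c0) / d + 1 with hQdef
    have step1 : (Q : ℝ) ^ d * ((Nat.factorial d) / (m : ℝ) ^ d) ≤ D m := by
      have h := key m hc0m
      have hcast : (v m : ℝ) + (Q : ℝ) ^ d ≤ (u m : ℝ) := by exact_mod_cast h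
      have hfac : (0:ℝ) ≤ (Nat.factorial d) / (m : ℝ) ^ d := by positivity
      have : ((u m : ℝ) - (v m : ℝ)) * ((Nat.factorial d) / (m : ℝ) ^ d) ≥
          (Q : ℝ) ^ d * ((Nat.factorial d) / (m : ℝ) ^ d) := by
        apply mul_le_mul_of_nonneg_right _ hfac
        linarith
      calc (Q : ℝ) ^ d * ((Nat.factorial d) / (m : ℝ) ^ d)
          ≤ ((u m : ℝ) - (v m : ℝ)) * ((Nat.factorial d) / (m : ℝ) ^ d) := this
        _ = D m := by rw [hD]; ring
    have step2 : ψ m ≤ (Q : ℝ) ^ d * ((Nat.factorial d) / (m : ℝ) ^ d) := by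
      rcases Nat.eq_zero_or_pos d with hd | hd
      · subst hd
        simp [hψdef, hKc]
      · have hdR : (0:ℝ) < (d:ℝ) := by exact_mod_cast hd
        have hQ : ((m : ℝ) - c0) / d ≤ (Q : ℝ) := by
          have h1 : (m - c0 : ℕ) < Q * d := by
            rw [hQdef]
            have ha := Nat.div_add_mod (m - c0) d
            have hb := Nat.mod_lt (m - c0) hd
            calc m - c0 = d * ((m - c0) / d) + (m - c0) % d := ha.symm
              _ < d * ((m - c0) / d) + d := by omega
              _ = ((m - c0) / d + 1) * d := by ring
          have h2 : ((m : ℝ) - c0) ≤ (Q : ℝ) * d := by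
            have : ((m - c0 : ℕ) : ℝ) = (m : ℝ) - c0 := by
              rw [Nat.cast_sub hc0m]
            rw [← this]
            exact_mod_cast h1.le
          rw [div_le_iff₀ hdR]
          exact h2
        have hQnn : (0:ℝ) ≤ ((m : ℝ) - c0) / d := by
          apply div_nonneg _ hdR.le
          have : (c0 : ℝ) ≤ m := by exact_mod_cast hc0m
          linarith
        have heqn : ψ m = (((m : ℝ) - c0) / d) ^ d * ((Nat.factorial d) / (m : ℝ) ^ d) := by
          simp only [hψdef, hKc]
          have h1 : 1 - (c0 : ℝ) / m = ((m : ℝ) - c0) / m := by field_simp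
          rw [h1, div_pow, div_pow, div_mul_div_comm, div_mul_div_comm,
            mul_comm ((m:ℝ) ^ d)]
        rw [heqn]
        apply mul_le_mul_of_nonneg_right _ (by positivity)
        exact pow_le_pow_left₀ hQnn hQ d
    exact step2.trans step1
  have hsub : Tendsto (fun m => D m - ψ m) atTop (nhds (-Kc)) := by
    have := hD0.sub hψ
    simpa using this
  have : (0:ℝ) ≤ -Kc := by
    apply ge_of_tendsto hsub
    filter_upwards [hbound] with m hm
    linarith
  linarith

/-- (Jonsson–Welker lemma.) Let `T = K[x₁,…,x_ℓ]` and `I ⊆ J` monomial ideals with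
(i) `dim T/I = dim T/J`, (ii) `e(T/I) = e(T/J)`, and (iii) `I = I_Δ` for a pure
simplicial complex `Δ` on `[ℓ]`. Then `I = J`. -/
theorem stmt_5 (K : Type) [Field K] (ℓ d : ℕ) (Δ : Finset (Finset (Fin ℓ)))
    (hempty : ∅ ∈ Δ)
    (hdown : ∀ s ∈ Δ, ∀ t ⊆ s, t ∈ Δ)
    (hpure : ∀ s ∈ Δ, (∀ t ∈ Δ, s ⊆ t → t = s) → s.card = d + 1)
    (J : Ideal (MvPolynomial (Fin ℓ) K)) (hJmono : IsMonomialIdeal J)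
    (hIJ : SRideal K ℓ Δ ≤ J)
    (hdim : ringKrullDim (MvPolynomial (Fin ℓ) K ⧸ SRideal K ℓ Δ) =
            ringKrullDim (MvPolynomial (Fin ℓ) K ⧸ J))
    (e : ℝ)
    (heI : IsMultiplicity K ℓ (SRideal K ℓ Δ) d e)
    (heJ : IsMultiplicity K ℓ J d e) :
    SRideal K ℓ Δ = J := by
  classical
  by_contra hne
  obtain ⟨M, hM⟩ := hJmono
  obtain ⟨f, hfJ, hfI⟩ := SetLike.exists_of_lt (lt_of_le_of_ne hIJ hne)
  obtain ⟨μ, hμJ, hμI⟩ := exists_monomial_mem_notMem hM hfJ hfI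
  have hsuppΔ : μ.support ∈ Δ := by
    by_contra h
    exact hμI ((monomial_mem_SR_iff hdown μ).2 h)
  -- find a facet F containing the support of μ
  obtain ⟨F, hFS, hFmax⟩ := Finset.exists_max_image
    (Δ.filter (fun t => μ.support ⊆ t)) Finset.card
    ⟨μ.support, Finset.mem_filter.2 ⟨hsuppΔ, subset_rfl⟩⟩
  rw [Finset.mem_filter] at hFS
  obtain ⟨hFΔ, hsuppF⟩ := hFS
  have hFfacet : ∀ t ∈ Δ, F ⊆ t → t = F := by
    intro t ht hFt
    have htS : t ∈ Δ.filter (fun t => μ.support ⊆ t) :=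
      Finset.mem_filter.2 ⟨ht, hsuppF.trans hFt⟩
    exact (Finset.eq_of_subset_of_card_le hFt (hFmax t htS)).symm
  have hcard : F.card = d + 1 := hpure F hFΔ hFfacet
  have key : ∀ m, μ.degree ≤ m →
      hilbF K ℓ J m + ((m - μ.degree) / d + 1) ^ d ≤ hilbF K ℓ (SRideal K ℓ Δ) m :=
    fun m hm => key_count hdown hFΔ hcard hIJ hμJ hsuppF m hm
  exact analysis_contra (hilbF K ℓ (SRideal K ℓ Δ)) (hilbF K ℓ J) e key heI heJ
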